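/- For every t ≥ 0, the squared modulus of the amplitude of ψ(t) = exp(−itH) s along w̃ is |⟨w̃, ψ(t)⟩|² = sin²(Eyt) + y² cos²(Eyt), where y = √(ℓ/N); in particular, at time T = π/(2Ey) = (π/(2E))√(N/ℓ) this probability equals 1, i.e. exp(−iTH) s lies in L (up to a phase it equals w̃). -/

import Mathlib

open scoped BigOperators
noncomputable section

local notation "⟪" x ", " y "⟫" => @inner ℂ _ _ x y

lemma exp_apply_eigen {V : Type*} [NormedAddCommGroup V] [NormedSpace ℂ V]
    [CompleteSpace V]
    (A : V →L[ℂ] V) (v : V) (μ : ℂ) (h : A v = μ • v) :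
    NormedSpace.exp A v = Complex.exp μ • v := by
  have hn : ∀ n : ℕ, (A ^ n) v = μ ^ n • v := by
    intro n
    induction n with
    | zero => simp
    | succ n ih =>
      rw [pow_succ, ContinuousLinearMap.mul_apply, h, map_smul, ih, smul_smul, ← pow_succ']
  have hsum : Summable fun n : ℕ => ((n.factorial : ℂ))⁻¹ • A ^ n :=
    NormedSpace.expSeries_summable' (𝕂 := ℂ) A
  have hts := (ContinuousLinearMap.apply ℂ V v).map_tsum hsum
  rw [NormedSpace.exp_eq_tsum (𝕂 := ℂ)]
  simp only [ContinuousLinearMap.apply_apply] at hts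
  calc (∑' n : ℕ, ((n.factorial : ℂ))⁻¹ • A ^ n) v
      = ∑' n : ℕ, (((n.factorial : ℂ))⁻¹ • A ^ n) v := hts
    _ = ∑' n : ℕ, (((n.factorial : ℂ))⁻¹ * μ ^ n) • v := by
        refine tsum_congr fun n => ?_
        rw [ContinuousLinearMap.smul_apply, hn, smul_smul]
    _ = (∑' n : ℕ, ((n.factorial : ℂ))⁻¹ * μ ^ n) • v := by
        refine Summable.tsum_smul_const ?_ v
        simpa [smul_eq_mul] using NormedSpace.expSeries_summable' (𝕂 := ℂ) μ
    _ = Complex.exp μ • v := by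
        rw [Complex.exp_eq_exp_ℂ, NormedSpace.exp_eq_tsum (𝕂 := ℂ)]
        simp [smul_eq_mul]

/-- the success probability `|⟨w̃, ψ(t)⟩|² = sin²(Eyt) + y² cos²(Eyt)` with
`y = √(ℓ/N)`, and at `T = π/(2Ey)` the state `exp(−iTH) s` lies in `L`. -/
theorem success_probability_and_terminal_time
    (N ℓ : ℕ) (hN : 2 ≤ N) (hℓ1 : 1 ≤ ℓ) (hℓN : ℓ < N)
    (w : Fin N → EuclideanSpace ℂ (Fin N)) (hw : Orthonormal ℂ w)
    (E : ℝ) (hE : 0 < E)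
    (s : EuclideanSpace ℂ (Fin N))
    (hs : s = ((Real.sqrt N : ℂ))⁻¹ • ∑ j : Fin N, w j)
    (H : EuclideanSpace ℂ (Fin N) →L[ℂ] EuclideanSpace ℂ (Fin N))
    (hH : ∀ u, H u = (E : ℂ) •
      ((∑ j ∈ Finset.univ.filter (fun j : Fin N => (j : ℕ) < ℓ), ⟪w j, u⟫ • w j)
        + ⟪s, u⟫ • s))
    (L : Submodule ℂ (EuclideanSpace ℂ (Fin N)))
    (hL : L = Submodule.span ℂ (w '' {j | (j : ℕ) < ℓ}))
    (wt : EuclideanSpace ℂ (Fin N))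
    (hwt : wt = ((Real.sqrt ℓ : ℂ))⁻¹ •
      ∑ j ∈ Finset.univ.filter (fun j : Fin N => (j : ℕ) < ℓ), w j)
    (y : ℝ) (hy : y = Real.sqrt ((ℓ : ℝ) / N))
    (T : ℝ) (hT : T = Real.pi / (2 * E * y)) :
    (∀ t : ℝ, 0 ≤ t →
      ‖⟪wt, NormedSpace.exp ((-(Complex.I * (t : ℂ))) • H) s⟫‖ ^ 2 =
        Real.sin (E * y * t) ^ 2 + y ^ 2 * Real.cos (E * y * t) ^ 2) ∧
    NormedSpace.exp ((-(Complex.I * (T : ℂ))) • H) s ∈ L := by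
  classical
  set F : Finset (Fin N) := Finset.univ.filter (fun j : Fin N => (j : ℕ) < ℓ) with hF
  -- basic positivity
  have hN0 : (0:ℝ) < (N:ℝ) := by exact_mod_cast Nat.lt_of_lt_of_le Nat.zero_lt_two hN
  have hℓ0 : (0:ℝ) < (ℓ:ℝ) := by exact_mod_cast hℓ1
  have hsN : (0:ℝ) < Real.sqrt N := Real.sqrt_pos.mpr hN0
  have hsℓ : (0:ℝ) < Real.sqrt ℓ := Real.sqrt_pos.mpr hℓ0
  have hy0 : 0 < y := by rw [hy]; exact Real.sqrt_pos.mpr (div_pos hℓ0 hN0)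
  have hyval : y = Real.sqrt ℓ / Real.sqrt N := by
    rw [hy, Real.sqrt_div hℓ0.le]
  have hsNc : ((Real.sqrt N : ℝ) : ℂ) ≠ 0 := by
    exact_mod_cast Complex.ofReal_ne_zero.mpr hsN.ne'
  have hsℓc : ((Real.sqrt ℓ : ℝ) : ℂ) ≠ 0 := by
    exact_mod_cast Complex.ofReal_ne_zero.mpr hsℓ.ne'
  have hcard : F.card = ℓ := by
    rw [hF, Finset.card_filter]
    rw [Fin.sum_univ_eq_sum_range (fun j => if j < ℓ then (1:ℕ) else 0)]
    rw [← Finset.card_filter]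
    have : (Finset.range N).filter (fun j => j < ℓ) = Finset.range ℓ := by
      ext j; simp; omega
    rw [this, Finset.card_range]
  -- inner products
  have hij : ∀ i j, ⟪w i, w j⟫ = if i = j then (1:ℂ) else 0 := orthonormal_iff_ite.mp hw
  have hws : ∀ j : Fin N, ⟪w j, s⟫ = ((Real.sqrt N : ℂ))⁻¹ := by
    intro j
    rw [hs, inner_smul_right, inner_sum]
    simp [hij]
  have hwwt : ∀ j ∈ F, ⟪w j, wt⟫ = ((Real.sqrt ℓ : ℂ))⁻¹ := by
    intro j hj
    rw [hwt, inner_smul_right, inner_sum]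
    simp only [hij]
    rw [Finset.sum_ite_eq, if_pos hj, mul_one]
  have hss : ⟪s, s⟫ = 1 := by
    nth_rewrite 1 [hs]
    rw [inner_smul_left, sum_inner]
    rw [Finset.sum_congr rfl (fun j _ => hws j), Finset.sum_const, Finset.card_univ,
      Fintype.card_fin]
    simp only [map_inv₀, Complex.conj_ofReal, nsmul_eq_mul]
    rw [← Complex.ofReal_natCast N, ← Real.mul_self_sqrt hN0.le]
    push_cast
    field_simp
    rw [Real.sqrt_sq hsN.le, div_self (pow_ne_zero 2 hsNc)]
  have hwts : ⟪wt, s⟫ = (y:ℂ) := by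
    rw [hwt, inner_smul_left, sum_inner]
    rw [Finset.sum_congr rfl (fun j _ => hws j), Finset.sum_const, hcard]
    simp only [map_inv₀, Complex.conj_ofReal, nsmul_eq_mul]
    rw [hyval, ← Complex.ofReal_natCast ℓ]
    rw [show ((ℓ:ℝ)) = Real.sqrt ℓ * Real.sqrt ℓ from (Real.mul_self_sqrt hℓ0.le).symm]
    push_cast
    field_simp
    rw [Real.sqrt_sq hsℓ.le, pow_two, mul_div_assoc, div_self hsℓc, mul_one]
  have hswt : ⟪s, wt⟫ = (y:ℂ) := by
    rw [← inner_conj_symm, hwts, Complex.conj_ofReal]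
  have hwtwt : ⟪wt, wt⟫ = 1 := by
    nth_rewrite 1 [hwt]
    rw [inner_smul_left, sum_inner]
    rw [Finset.sum_congr rfl (fun j hj => hwwt j hj), Finset.sum_const, hcard]
    simp only [map_inv₀, Complex.conj_ofReal, nsmul_eq_mul]
    rw [← Complex.ofReal_natCast ℓ,
      show ((ℓ:ℝ)) = Real.sqrt ℓ * Real.sqrt ℓ from (Real.mul_self_sqrt hℓ0.le).symm]
    push_cast
    field_simp
    rw [Real.sqrt_sq hsℓ.le, div_self (pow_ne_zero 2 hsℓc)]
  -- sum actions
  have hSwt : (∑ j ∈ F, w j) = ((Real.sqrt ℓ : ℝ):ℂ) • wt := by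
    rw [hwt, smul_inv_smul₀ hsℓc]
  have hPsum_s : (∑ j ∈ F, ⟪w j, s⟫ • w j) = ((y:ℝ):ℂ) • wt := by
    calc (∑ j ∈ F, ⟪w j, s⟫ • w j) = ((Real.sqrt N : ℝ):ℂ)⁻¹ • ∑ j ∈ F, w j := by
          rw [Finset.smul_sum]
          exact Finset.sum_congr rfl fun j _ => by rw [hws]
      _ = ((y:ℝ):ℂ) • wt := by
          rw [hSwt, smul_smul, hyval]
          push_cast
          rw [div_eq_inv_mul]
  have hPsum_wt : (∑ j ∈ F, ⟪w j, wt⟫ • w j) = wt := by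
    calc (∑ j ∈ F, ⟪w j, wt⟫ • w j) = ((Real.sqrt ℓ : ℝ):ℂ)⁻¹ • ∑ j ∈ F, w j := by
          rw [Finset.smul_sum]
          exact Finset.sum_congr rfl fun j hj => by rw [hwwt j hj]
      _ = wt := hwt.symm
  -- action of H
  have hHs : H s = (E:ℂ) • (((y:ℝ):ℂ) • wt + s) := by
    rw [hH, hPsum_s, hss, one_smul]
  have hHwt : H wt = (E:ℂ) • (wt + ((y:ℝ):ℂ) • s) := by
    rw [hH, hPsum_wt, hswt]
  -- eigenvectors of c • H
  have hA1 : ∀ c : ℂ, (c • H) (s + wt) = (c * E * (1 + (y:ℂ))) • (s + wt) := by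
    intro c
    rw [ContinuousLinearMap.smul_apply, map_add, hHs, hHwt]
    module
  have hA2 : ∀ c : ℂ, (c • H) (s - wt) = (c * E * (1 - (y:ℂ))) • (s - wt) := by
    intro c
    rw [ContinuousLinearMap.smul_apply, map_sub, hHs, hHwt]
    module
  have hexp : ∀ c : ℂ, NormedSpace.exp (c • H) s
      = (2:ℂ)⁻¹ • (Complex.exp (c * E * (1 + (y:ℂ))) • (s + wt)
        + Complex.exp (c * E * (1 - (y:ℂ))) • (s - wt)) := by
    intro c
    have e1 := exp_apply_eigen (c • H) (s + wt) _ (hA1 c)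
    have e2 := exp_apply_eigen (c • H) (s - wt) _ (hA2 c)
    have hsplit : s = (2:ℂ)⁻¹ • ((s + wt) + (s - wt)) := by module
    calc NormedSpace.exp (c • H) s
        = NormedSpace.exp (c • H) ((2:ℂ)⁻¹ • ((s + wt) + (s - wt))) := by rw [← hsplit]
      _ = (2:ℂ)⁻¹ • (NormedSpace.exp (c • H) (s + wt)
            + NormedSpace.exp (c • H) (s - wt)) := by rw [map_smul, map_add]
      _ = _ := by rw [e1, e2]
  have hamp : ∀ c : ℂ, ⟪wt, NormedSpace.exp (c • H) s⟫
      = (2:ℂ)⁻¹ * (Complex.exp (c * E * (1 + (y:ℂ))) * ((y:ℂ) + 1)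
        + Complex.exp (c * E * (1 - (y:ℂ))) * ((y:ℂ) - 1)) := by
    intro c
    rw [hexp c, inner_smul_right, inner_add_right, inner_smul_right, inner_smul_right,
      inner_add_right, inner_sub_right, hwts, hwtwt]
  constructor
  · intro t _
    set θ := E * y * t with hθ
    rw [hamp]
    have harg1 : (-(Complex.I * (t:ℂ))) * E * (1 + (y:ℂ))
        = ((-(E*t) : ℝ):ℂ) * Complex.I + ((-θ : ℝ):ℂ) * Complex.I := by
      push_cast [hθ]; ring
    have harg2 : (-(Complex.I * (t:ℂ))) * E * (1 - (y:ℂ))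
        = ((-(E*t) : ℝ):ℂ) * Complex.I + ((θ : ℝ):ℂ) * Complex.I := by
      push_cast [hθ]; ring
    rw [harg1, harg2, Complex.exp_add, Complex.exp_add]
    have hz' : Complex.exp (((-θ:ℝ):ℂ) * Complex.I) * ((y:ℂ) + 1)
          + Complex.exp (((θ:ℝ):ℂ) * Complex.I) * ((y:ℂ) - 1)
        = 2 * (((y * Real.cos θ : ℝ):ℂ) + ((-(Real.sin θ) : ℝ):ℂ) * Complex.I) := by
      simp only [Complex.exp_mul_I, ← Complex.ofReal_cos, ← Complex.ofReal_sin,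
        Real.cos_neg, Real.sin_neg]
      push_cast
      ring
    have hfac : (2:ℂ)⁻¹ * (Complex.exp (((-(E*t) : ℝ):ℂ) * Complex.I)
          * Complex.exp (((-θ:ℝ):ℂ) * Complex.I) * ((y:ℂ) + 1)
        + Complex.exp (((-(E*t) : ℝ):ℂ) * Complex.I)
          * Complex.exp (((θ:ℝ):ℂ) * Complex.I) * ((y:ℂ) - 1))
        = Complex.exp (((-(E*t) : ℝ):ℂ) * Complex.I)
          * (((y * Real.cos θ : ℝ):ℂ) + ((-(Real.sin θ) : ℝ):ℂ) * Complex.I) := by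
      have expand : Complex.exp (((-(E*t) : ℝ):ℂ) * Complex.I)
          * Complex.exp (((-θ:ℝ):ℂ) * Complex.I) * ((y:ℂ) + 1)
        + Complex.exp (((-(E*t) : ℝ):ℂ) * Complex.I)
          * Complex.exp (((θ:ℝ):ℂ) * Complex.I) * ((y:ℂ) - 1)
        = Complex.exp (((-(E*t) : ℝ):ℂ) * Complex.I)
          * (Complex.exp (((-θ:ℝ):ℂ) * Complex.I) * ((y:ℂ) + 1)
            + Complex.exp (((θ:ℝ):ℂ) * Complex.I) * ((y:ℂ) - 1)) := by ring
      rw [expand, hz']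
      ring
    rw [hfac, norm_mul]
    have h1 : ‖Complex.exp (((-(E*t) : ℝ):ℂ) * Complex.I)‖ = 1 := by
      rw [Complex.norm_exp_ofReal_mul_I]
    rw [h1, one_mul, Complex.sq_norm, Complex.normSq_add_mul_I]
    ring
  · -- terminal time
    have hyE : E * y ≠ 0 := by positivity
    have hEyT : E * y * T = Real.pi / 2 := by
      rw [hT]
      field_simp
    have hargp : (-(Complex.I * (T:ℂ))) * E * (1 + (y:ℂ))
        = ((-(E*T) : ℝ):ℂ) * Complex.I + ((-(Real.pi/2) : ℝ):ℂ) * Complex.I := by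
      have : ((E * y * T : ℝ) : ℂ) = ((Real.pi / 2 : ℝ) : ℂ) := Complex.ofReal_inj.mpr hEyT
      push_cast at this ⊢
      linear_combination (-Complex.I) * this
    have hargm : (-(Complex.I * (T:ℂ))) * E * (1 - (y:ℂ))
        = ((-(E*T) : ℝ):ℂ) * Complex.I + ((Real.pi/2 : ℝ):ℂ) * Complex.I := by
      have : ((E * y * T : ℝ) : ℂ) = ((Real.pi / 2 : ℝ) : ℂ) := Complex.ofReal_inj.mpr hEyT
      push_cast at this ⊢
      linear_combination Complex.I * this
    have h0 : Complex.exp ((-(Complex.I * (T:ℂ))) * E * (1 - (y:ℂ)))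
        = - Complex.exp ((-(Complex.I * (T:ℂ))) * E * (1 + (y:ℂ))) := by
      rw [hargp, hargm, Complex.exp_add, Complex.exp_add]
      simp only [Complex.exp_mul_I, ← Complex.ofReal_cos, ← Complex.ofReal_sin,
        Real.cos_neg, Real.sin_neg, Real.cos_pi_div_two, Real.sin_pi_div_two]
      push_cast
      ring
    have hψ : NormedSpace.exp ((-(Complex.I * (T:ℂ))) • H) s
        = Complex.exp ((-(Complex.I * (T:ℂ))) * E * (1 + (y:ℂ))) • wt := by
      rw [hexp, h0]
      module
    rw [hψ]
    have hwtL : wt ∈ L := by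
      rw [hL, hwt]
      refine Submodule.smul_mem _ _ (Submodule.sum_mem _ fun j hj => Submodule.subset_span ?_)
      exact ⟨j, by simpa [hF] using (Finset.mem_filter.mp hj).2, rfl⟩
    exact Submodule.smul_mem _ _ hwtL
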